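/- arXiv:2011.11359 — 2 statements merged into one kernel-verified Lean document; each statement's English description precedes it below -/
import Mathlib

section
/- Let $A$ be a linear operator on a Banach space $X$, $L : D(L) \subset X \to Y$ a surjective linear boundary operator with $D(A) \subset D(L)$, and let $A_0 = A|_{\ker L}$. Suppose $\lambda \in \rho(A_0)$ (the resolvent set of $A_0$). Then $D(A) = D(A_0) \oplus \ker(\lambda - A)$, i.e., every $u \in D(A)$ decomposes uniquely as $u = u_0 + u_1$ with $u_0 \in D(A_0)$ and $u_1 \in \ker(\lambda - A)$, and the restriction $L|_{\ker(\lambda - A)} : \ker(\lambda - A) \to Y$ is a bijection onto $Y$. -/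
/-- **Greiner's decomposition lemma.**  Let `A : D(A) ⊆ X → X` be a linear operator,
`L : D(A) → Y` a surjective linear boundary operator, and `A₀ = A|_{ker L}`.  If
`λ ∈ ρ(A₀)`, i.e. `λ - A₀ : ker L → X` is bijective, then
`D(A) = D(A₀) ⊕ ker(λ - A)` and `L` restricts to a bijection of `ker(λ - A)` onto `Y`. -/
theorem greiner_decomposition
    (X Y : Type*) [NormedAddCommGroup X] [NormedSpace ℝ X]
    [AddCommGroup Y] [Module ℝ Y]
    (dom : Submodule ℝ X) (A : dom →ₗ[ℝ] X) (L : dom →ₗ[ℝ] Y)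
    (hLsurj : Function.Surjective L)
    (lam : ℝ)
    (hres : Function.Bijective fun u : LinearMap.ker L =>
      (lam • dom.subtype - A) (u : dom)) :
    (∀ u : dom, ∃! p : (LinearMap.ker L) × (LinearMap.ker (lam • dom.subtype - A)),
        u = (p.1 : dom) + (p.2 : dom)) ∧
    Function.Bijective fun v : LinearMap.ker (lam • dom.subtype - A) => L (v : dom) := by
  set B : dom →ₗ[ℝ] X := lam • dom.subtype - A with hB
  set e : LinearMap.ker L ≃ X := Equiv.ofBijective _ hres with he
  have hdecomp : ∀ u : dom,
      ∃! p : (LinearMap.ker L) × (LinearMap.ker B), u = (p.1 : dom) + (p.2 : dom) := by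
    intro u
    set u₀ : LinearMap.ker L := e.symm (B u) with hu0
    have hBu₀ : B (u₀ : dom) = B u := e.apply_symm_apply (B u)
    have hker : u - (u₀ : dom) ∈ LinearMap.ker B := by
      simp [LinearMap.mem_ker, map_sub, hBu₀]
    refine ⟨⟨u₀, ⟨u - u₀, hker⟩⟩, by simp, ?_⟩
    rintro ⟨p₁, p₂⟩ hp
    have hB2 : B (p₂ : dom) = 0 := p₂.2
    have hBeq : B (p₁ : dom) = B u := by
      rw [hp]; simp [map_add, hB2]
    have h1 : p₁ = u₀ := by
      apply hres.injective
      exact hBeq.trans hBu₀.symm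
    have h2 : (p₂ : dom) = u - (u₀ : dom) := by
      have := hp
      rw [h1] at this
      rw [this]; abel
    exact Prod.ext_iff.mpr ⟨h1, Subtype.ext h2⟩
  refine ⟨hdecomp, ?_, ?_⟩
  · -- injective
    intro v w hvw
    have hk : (v : dom) - (w : dom) ∈ LinearMap.ker B := by
      simp [LinearMap.mem_ker, map_sub, v.2, w.2]
    have hL : L ((v : dom) - (w : dom)) = 0 := by
      have : L (v:dom) = L (w:dom) := hvw
      simp [map_sub, this]
    obtain ⟨p, hp, hpuniq⟩ := hdecomp ((v : dom) - (w : dom))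
    have h1 : (⟨⟨(v:dom) - (w:dom), hL⟩, (0 : LinearMap.ker B)⟩ :
        (LinearMap.ker L) × (LinearMap.ker B)) = p := hpuniq _ (by simp)
    have h2 : (⟨(0 : LinearMap.ker L), ⟨(v:dom) - (w:dom), hk⟩⟩ :
        (LinearMap.ker L) × (LinearMap.ker B)) = p := hpuniq _ (by simp)
    have hz : (v:dom) - (w:dom) = 0 := by
      have := congrArg (fun q => ((q.1 : dom))) (h1.trans h2.symm)
      simpa using this
    exact Subtype.ext (sub_eq_zero.mp hz)
  · -- surjective
    intro y
    obtain ⟨u, hu⟩ := hLsurj y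
    obtain ⟨p, hp, -⟩ := hdecomp u
    refine ⟨p.2, ?_⟩
    have hL1 : L (p.1 : dom) = 0 := p.1.2
    have hy : y = L (p.1 : dom) + L (p.2 : dom) := by rw [← hu, hp, map_add]
    rw [hL1, zero_add] at hy
    exact hy.symm
end

section
/- Let $f : \mathbb{R} \to \mathbb{R}$, $f(\eta) = -a \eta^{2k+1} + \sum_{l=0}^{2k} a_l \eta^l$ be a polynomial of odd degree $2k+1$ with leading coefficient $-a$ where $a \geq c > 0$ and $|a_l| \leq C$ for all $l$. Then there exist constants $a'', b'' > 0$ depending only on $c, C, k$ such that for all $u, v \in \mathbb{R}$: $(f(u+v) - f(v)) \cdot \mathrm{sgn}(u) \leq a''(1 + |v|)^{2k+1} - b'' |u|^{2k+1}$. -/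
lemma key1 (n : ℕ) (hn : Odd n) (u v : ℝ) (hu : 0 ≤ u) :
    (u/2)^n - |v|^n ≤ (u+v)^n - v^n := by
  have hn0 : n ≠ 0 := by rintro rfl; simp at hn
  rcases le_or_gt 0 v with hv | hv
  · rw [abs_of_nonneg hv]
    have h1 : u ^ n + v ^ n ≤ (u + v) ^ n := pow_add_pow_le hu hv hn0
    have h2 : (u/2)^n ≤ u^n := pow_le_pow_left₀ (by linarith) (by linarith) n
    have h3 : (0:ℝ) ≤ v^n := pow_nonneg hv n
    linarith
  · rw [abs_of_neg hv]
    rcases le_or_gt (2 * (-v)) u with h2v | h2v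
    · have h1 : (u/2)^n ≤ (u+v)^n := pow_le_pow_left₀ (by linarith) (by linarith) n
      have h3 : v^n = -((-v)^n) := by
        rw [hn.neg_pow]; ring
      have h4 : 0 ≤ (-v)^n := pow_nonneg (by linarith) n
      linarith
    · have h1 : (u/2)^n ≤ (-v)^n := pow_le_pow_left₀ (by linarith) (by linarith) n
      have h2 : v ≤ u + v := by linarith
      have h3 : v^n ≤ (u+v)^n := (hn.strictMono_pow (R := ℝ)).monotone h2
      linarith

lemma young' (k : ℕ) (x ε : ℝ) (hx : 0 ≤ x) (hε : 0 < ε) :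
    x^(2*k) ≤ ε * x^(2*k+1) + (1/ε)^(2*k) := by
  rcases le_or_gt x (1/ε) with h | h
  · have : x^(2*k) ≤ (1/ε)^(2*k) := pow_le_pow_left₀ hx h _
    nlinarith [pow_nonneg hx (2*k+1), mul_nonneg hε.le (pow_nonneg hx (2*k+1))]
  · have h1 : x^(2*k+1) = x * x^(2*k) := by ring
    have h2 : (1/ε) * x^(2*k) ≤ x * x^(2*k) :=
      mul_le_mul_of_nonneg_right h.le (pow_nonneg hx _)
    have h3 : 0 < (1/ε) := by positivity
    have h4 : x^(2*k) ≤ ε * (x * x^(2*k)) := by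
      rw [← mul_le_mul_iff_right₀ h3]; calc (1/ε) * x^(2*k) ≤ x * x^(2*k) := h2
        _ = (1/ε) * (ε * (x * x^(2*k))) := by field_simp
    have h5 : (0:ℝ) ≤ (1/ε)^(2*k) := by positivity
    nlinarith

lemma twopow (n : ℕ) (x y : ℝ) (hx : 0 ≤ x) (hy : 0 ≤ y) :
    (x + y)^n ≤ 2^n * (x^n + y^n) := by
  have h : (x+y)^n ≤ (2 * max x y)^n := by
    apply pow_le_pow_left₀ (by linarith)
    rcases le_total x y with h | h
    · simp [max_eq_right h]; linarith
    · simp [max_eq_left h]; linarith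
  rw [mul_pow] at h
  rcases le_total x y with h' | h'
  · rw [max_eq_right h'] at h
    nlinarith [pow_nonneg hx n, pow_pos (by norm_num : (0:ℝ) < 2) n]
  · rw [max_eq_left h'] at h
    nlinarith [pow_nonneg hy n, pow_pos (by norm_num : (0:ℝ) < 2) n]

lemma step1 (n : ℕ) (hn : Odd n) (c a u v : ℝ) (hc : 0 < c) (hca : c ≤ a) :
    (-a * ((u+v)^n - v^n)) * Real.sign u ≤ c * |v|^n - c * (|u|/2)^n := by
  have hn0 : n ≠ 0 := by rintro rfl; simp at hn
  have hmono := (hn.strictMono_pow (R := ℝ)).monotone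
  rcases lt_trichotomy u 0 with hu | hu | hu
  · rw [Real.sign_of_neg hu, abs_of_neg hu]
    have hkey := key1 n hn (-u) (-v) (by linarith)
    rw [abs_neg] at hkey
    have e1 : (-u + -v)^n = -((u+v)^n) := by
      rw [show -u + -v = -(u+v) by ring, hn.neg_pow]
    have e2 : (-v)^n = -(v^n) := hn.neg_pow v
    rw [e1, e2] at hkey
    have hD : (u+v)^n ≤ v^n := hmono (by linarith : u + v ≤ v)
    nlinarith [mul_le_mul_of_nonneg_right hca (by linarith : (0:ℝ) ≤ v^n - (u+v)^n),
               mul_le_mul_of_nonneg_left hkey hc.le]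
  · subst hu
    rw [Real.sign_zero, abs_zero, mul_zero]
    rw [zero_div, zero_pow hn0, mul_zero, sub_zero]
    positivity
  · rw [Real.sign_of_pos hu, abs_of_pos hu, mul_one]
    have hkey := key1 n hn u v hu.le
    have hD : v^n ≤ (u+v)^n := hmono (by linarith : v ≤ u + v)
    nlinarith [mul_le_mul_of_nonneg_right hca (by linarith : (0:ℝ) ≤ (u+v)^n - v^n),
               mul_le_mul_of_nonneg_left hkey hc.le]

/-- One-dimensional dissipativity estimate for an odd-degree polynomial
`f(η) = -a η^{2k+1} + ∑_{l=0}^{2k} a_l η^l` with leading coefficient `-a`, `a ≥ c > 0`,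
and `|a_l| ≤ C`: there are constants `a'', b'' > 0` depending only on `c`, `C`, `k` with
`(f(u+v) - f(v)) · sgn(u) ≤ a''(1+|v|)^{2k+1} - b''|u|^{2k+1}` for all `u, v ∈ ℝ`. -/
theorem polynomial_dissipativity_estimate
    (k : ℕ) (c C : ℝ) (hc : 0 < c) (hC : 0 ≤ C) :
    ∃ a'' b'' : ℝ, 0 < a'' ∧ 0 < b'' ∧
      ∀ (a : ℝ) (co : ℕ → ℝ), c ≤ a → (∀ l, l ≤ 2 * k → |co l| ≤ C) →
        ∀ u v : ℝ,
          ((fun η : ℝ => -a * η ^ (2 * k + 1)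
              + ∑ l ∈ Finset.range (2 * k + 1), co l * η ^ l) (u + v)
            - (fun η : ℝ => -a * η ^ (2 * k + 1)
              + ∑ l ∈ Finset.range (2 * k + 1), co l * η ^ l) v) * Real.sign u
          ≤ a'' * (1 + |v|) ^ (2 * k + 1) - b'' * |u| ^ (2 * k + 1) := by
  have hodd : Odd (2*k+1) := ⟨k, by ring⟩
  obtain ⟨M, hM_def⟩ : ∃ M : ℝ, M = 2*C*(2*k+1)+1 := ⟨_, rfl⟩
  have hM : 0 < M := by rw [hM_def]; positivity
  obtain ⟨ε, hε_def⟩ : ∃ ε : ℝ, ε = c / (M * 2^(2*k+1+1) * 2^(2*k+1)) := ⟨_, rfl⟩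
  have hε : 0 < ε := by rw [hε_def]; positivity
  obtain ⟨B, hB_def⟩ : ∃ B : ℝ, B = c / 2^(2*k+1+1) := ⟨_, rfl⟩
  have hB : 0 < B := by rw [hB_def]; positivity
  have hMε : M * ε * 2^(2*k+1) = B := by
    rw [hε_def, hB_def]
    field_simp
  have ha'' : 0 < c + B + M*(1/ε)^(2*k) := by
    have h01 : 0 < M*(1/ε)^(2*k) := mul_pos hM (pow_pos (by positivity) _)
    linarith
  refine ⟨c + B + M*(1/ε)^(2*k), B, ha'', hB, ?_⟩
  intro a co hca hco u v
  show (-a*(u+v)^(2*k+1) + ∑ l ∈ Finset.range (2*k+1), co l * (u+v)^l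
        - (-a*v^(2*k+1) + ∑ l ∈ Finset.range (2*k+1), co l * v^l)) * Real.sign u
      ≤ (c + B + M*(1/ε)^(2*k)) * (1 + |v|)^(2*k+1) - B * |u|^(2*k+1)
  have hsum : (∑ l ∈ Finset.range (2*k+1), co l * (u+v)^l)
      - (∑ l ∈ Finset.range (2*k+1), co l * v^l)
      = ∑ l ∈ Finset.range (2*k+1), co l * ((u+v)^l - v^l) := by
    rw [← Finset.sum_sub_distrib]
    exact Finset.sum_congr rfl fun l _ => by ring
  have hre : (-a*(u+v)^(2*k+1) + ∑ l ∈ Finset.range (2*k+1), co l * (u+v)^l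
        - (-a*v^(2*k+1) + ∑ l ∈ Finset.range (2*k+1), co l * v^l)) * Real.sign u
      = (-a*((u+v)^(2*k+1) - v^(2*k+1))) * Real.sign u
        + (∑ l ∈ Finset.range (2*k+1), co l * ((u+v)^l - v^l)) * Real.sign u := by
    rw [← hsum]; ring
  rw [hre]
  set x : ℝ := 1 + |u| + |v| with hx_def
  have hx1 : (1:ℝ) ≤ x := by
    have := abs_nonneg u; have := abs_nonneg v; rw [hx_def]; linarith
  have hx0 : (0:ℝ) ≤ x := by linarith
  -- bound on the lower-order sum
  have hT : |∑ l ∈ Finset.range (2*k+1), co l * ((u+v)^l - v^l)| ≤ M * x^(2*k) := by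
    have hxk : (0:ℝ) ≤ x^(2*k) := pow_nonneg hx0 _
    calc |∑ l ∈ Finset.range (2*k+1), co l * ((u+v)^l - v^l)|
        ≤ ∑ l ∈ Finset.range (2*k+1), |co l * ((u+v)^l - v^l)| :=
          Finset.abs_sum_le_sum_abs _ _
      _ ≤ ∑ _l ∈ Finset.range (2*k+1), 2*C*x^(2*k) := by
          apply Finset.sum_le_sum
          intro l hl
          rw [Finset.mem_range] at hl
          have h1 : |co l| ≤ C := hco l (by omega)
          have huv : |u+v| ≤ x := by
            have := abs_add_le u v; have := abs_nonneg u; have := abs_nonneg v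
            rw [hx_def]; linarith
          have hvx : |v| ≤ x := by
            have := abs_nonneg u; rw [hx_def]; linarith
          have h2 : |(u+v)^l| ≤ x^(2*k) := by
            rw [abs_pow]
            calc |u+v|^l ≤ x^l := pow_le_pow_left₀ (abs_nonneg _) huv l
              _ ≤ x^(2*k) := pow_le_pow_right₀ hx1 (by omega)
          have h3 : |v^l| ≤ x^(2*k) := by
            rw [abs_pow]
            calc |v|^l ≤ x^l := pow_le_pow_left₀ (abs_nonneg _) hvx l
              _ ≤ x^(2*k) := pow_le_pow_right₀ hx1 (by omega)
          have h4 : |(u+v)^l - v^l| ≤ 2*x^(2*k) := by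
            calc |(u+v)^l - v^l| ≤ |(u+v)^l| + |v^l| := abs_sub _ _
              _ ≤ 2*x^(2*k) := by linarith
          calc |co l * ((u+v)^l - v^l)| = |co l| * |(u+v)^l - v^l| := abs_mul _ _
            _ ≤ C * (2*x^(2*k)) :=
              mul_le_mul h1 h4 (abs_nonneg _) hC
            _ = 2*C*x^(2*k) := by ring
      _ = (2*k+1 : ℕ) * (2*C*x^(2*k)) := by
          rw [Finset.sum_const, Finset.card_range, nsmul_eq_mul]
      _ ≤ M * x^(2*k) := by
          push_cast
          rw [hM_def]
          nlinarith [mul_nonneg hC hxk]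
  have habs_s : |Real.sign u| ≤ 1 := by
    rcases Real.sign_apply_eq u with h|h|h <;> rw [h] <;> norm_num
  have hTs : (∑ l ∈ Finset.range (2*k+1), co l * ((u+v)^l - v^l)) * Real.sign u
      ≤ M * x^(2*k) := by
    calc (∑ l ∈ Finset.range (2*k+1), co l * ((u+v)^l - v^l)) * Real.sign u
        ≤ |(∑ l ∈ Finset.range (2*k+1), co l * ((u+v)^l - v^l)) * Real.sign u| :=
          le_abs_self _
      _ = |∑ l ∈ Finset.range (2*k+1), co l * ((u+v)^l - v^l)| * |Real.sign u| :=
          abs_mul _ _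
      _ ≤ M * x^(2*k) * 1 :=
          mul_le_mul hT habs_s (abs_nonneg _) (by positivity)
      _ = M * x^(2*k) := mul_one _
  have h1 := step1 (2*k+1) hodd c a u v hc hca
  have hyoung := young' k x ε hx0 hε
  have f3 : M * x^(2*k) ≤ M*ε*x^(2*k+1) + M*(1/ε)^(2*k) := by
    nlinarith [mul_le_mul_of_nonneg_left hyoung hM.le]
  have htwo := twopow (2*k+1) (1+|v|) |u| (by positivity) (abs_nonneg _)
  rw [show (1+|v|)+|u| = x by rw [hx_def]; ring] at htwo
  have f4 : M*ε*x^(2*k+1) ≤ B*((1+|v|)^(2*k+1) + |u|^(2*k+1)) := by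
    calc M*ε*x^(2*k+1) ≤ M*ε*(2^(2*k+1)*((1+|v|)^(2*k+1)+|u|^(2*k+1))) :=
          mul_le_mul_of_nonneg_left htwo (by positivity)
      _ = (M*ε*2^(2*k+1))*((1+|v|)^(2*k+1)+|u|^(2*k+1)) := by ring
      _ = B*((1+|v|)^(2*k+1) + |u|^(2*k+1)) := by rw [hMε]
  have h8 : |v|^(2*k+1) ≤ (1+|v|)^(2*k+1) :=
    pow_le_pow_left₀ (abs_nonneg v) (by linarith) _
  have h9 : (1:ℝ) ≤ (1+|v|)^(2*k+1) := by
    calc (1:ℝ) = 1^(2*k+1) := (one_pow _).symm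
      _ ≤ (1+|v|)^(2*k+1) := pow_le_pow_left₀ (by norm_num) (by have := abs_nonneg v; linarith) _
  have f5 : c*|v|^(2*k+1) ≤ c*(1+|v|)^(2*k+1) := mul_le_mul_of_nonneg_left h8 hc.le
  have f6 : M*(1/ε)^(2*k) ≤ M*(1/ε)^(2*k)*(1+|v|)^(2*k+1) :=
    le_mul_of_one_le_right (by positivity) h9
  have f7 : c*(|u|/2)^(2*k+1) = 2*B*|u|^(2*k+1) := by
    rw [div_pow, hB_def, pow_succ]
    field_simp
    ring
  linarith [h1, hTs, f3, f4, f5, f6, f7]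
end
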